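/- arXiv:2402.05768 — 3 statements merged into one kernel-verified Lean document; each statement's English description precedes it below -/
import Mathlib

section
/- Fix real numbers ω > 0, h > 0, α ≥ 1/2, and β ≥ 0. Every complex eigenvalue of the Newmark amplification matrix T_{α,β,ω,h} has absolute value at most 1 if and only if ω²·h²·(α/2 − β) ≤ 1. Equivalently (when β < α/2), the Newmark scheme is spectrally stable if and only if h ≤ (1/ω)·√(1/(α/2 − β)). -/
/-- The Newmark amplification matrix `T_{α,β,ω,h}` for the scalar oscillator
`ẍ = -ω²·x`, acting on states `(x, v, a) ∈ ℝ³`: it sends `(x, v, a)` to the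
unique `(x', v', a')` with `x' = (x + h·v + (1/2 − β)·h²·a)/(1 + β·ω²·h²)`,
`a' = −ω²·x'`, `v' = v + h·((1 − α)·a + α·a')`. -/
noncomputable def NewmarkMatrix (ω h α β : ℝ) : Matrix (Fin 3) (Fin 3) ℝ :=
  let D := 1 + β * ω ^ 2 * h ^ 2
  !![1 / D, h / D, (1 / 2 - β) * h ^ 2 / D;
     -(α * ω ^ 2 * h) / D, 1 - α * ω ^ 2 * h ^ 2 / D,
       h * (1 - α) - α * (1 / 2 - β) * ω ^ 2 * h ^ 3 / D;
     -ω ^ 2 / D, -(ω ^ 2 * h) / D, -((1 / 2 - β) * ω ^ 2 * h ^ 2) / D]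

/-- Eigenvalues of a complex 3×3 matrix are the roots of `det (M - μ • 1)`. -/
lemma eig_iff_det (M : Matrix (Fin 3) (Fin 3) ℂ) (μ : ℂ) :
    Module.End.HasEigenvalue (Matrix.toLin' M) μ ↔ (M - μ • 1).det = 0 := by
  rw [← Matrix.exists_mulVec_eq_zero_iff]
  rw [Module.End.hasEigenvalue_iff, Submodule.ne_bot_iff]
  constructor
  · rintro ⟨v, hv, hv0⟩
    refine ⟨v, hv0, ?_⟩
    rw [Module.End.mem_eigenspace_iff, Matrix.toLin'_apply] at hv
    rw [Matrix.sub_mulVec, Matrix.smul_mulVec, Matrix.one_mulVec, hv, sub_self]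
  · rintro ⟨v, hv0, hv⟩
    refine ⟨v, ?_, hv0⟩
    rw [Module.End.mem_eigenspace_iff, Matrix.toLin'_apply]
    rw [Matrix.sub_mulVec, Matrix.smul_mulVec, Matrix.one_mulVec, sub_eq_zero] at hv
    exact hv

set_option maxHeartbeats 1000000 in
lemma newmark_det (ω h α β : ℝ) (hD : (1:ℝ) + β * ω ^ 2 * h ^ 2 ≠ 0) (μ : ℂ) :
    ((NewmarkMatrix ω h α β).map Complex.ofReal - μ • 1).det
      = -(μ * (μ ^ 2
          - (((2 - ω ^ 2 * h ^ 2 * (α + 1 / 2 - 2 * β)) / (1 + β * ω ^ 2 * h ^ 2) : ℝ) : ℂ) * μ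
          + (((1 + ω ^ 2 * h ^ 2 * (1 / 2 + β - α)) / (1 + β * ω ^ 2 * h ^ 2) : ℝ) : ℂ))) := by
  have hD' : ((1:ℂ) + (β:ℂ) * (ω:ℂ) ^ 2 * (h:ℂ) ^ 2) ≠ 0 := by
    exact_mod_cast fun H => hD (by exact_mod_cast H)
  simp [NewmarkMatrix, Matrix.det_fin_three, Matrix.sub_apply, Matrix.smul_apply,
    Matrix.map_apply, Matrix.one_apply]
  have key : ((1:ℂ) + (β:ℂ) * (ω:ℂ) ^ 2 * (h:ℂ) ^ 2) * ((1:ℂ) + (β:ℂ) * (ω:ℂ) ^ 2 * (h:ℂ) ^ 2)⁻¹ = 1 :=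
    mul_inv_cancel₀ hD'
  push_cast
  linear_combination (-(μ ^ 2)) * key

/-- Both roots of `z² - Sz + P` (real coefficients) lie in the closed unit disk
iff `1+S+P ≥ 0`, given `P ≤ 1` and `1 - S + P > 0`. -/
lemma quad_roots_abs_le_one_iff (S P : ℝ) (hP : P ≤ 1) (hq1 : 0 < 1 - S + P) :
    (∀ μ : ℂ, μ ^ 2 - (S : ℂ) * μ + (P : ℂ) = 0 → ‖μ‖ ≤ 1) ↔ 0 ≤ 1 + S + P := by
  constructor
  · intro hall
    by_contra hneg
    push_neg at hneg
    have hd0 : 0 ≤ S ^ 2 - 4 * P := by nlinarith [sq_nonneg (S + 2)]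
    set t := Real.sqrt (S ^ 2 - 4 * P) with ht
    have ht0 : 0 ≤ t := Real.sqrt_nonneg _
    have ht2 : t ^ 2 = S ^ 2 - 4 * P := Real.sq_sqrt hd0
    have htS : S + 2 < t := by nlinarith [sq_nonneg (t + (S + 2))]
    set r := (S - t) / 2 with hr
    have hroot : r ^ 2 - S * r + P = 0 := by
      rw [hr]; field_simp; nlinarith [ht2]
    have hrlt : r < -1 := by rw [hr]; linarith
    have habs := hall ((r : ℝ) : ℂ) (by
      have : ((r ^ 2 - S * r + P : ℝ) : ℂ) = 0 := by exact_mod_cast hroot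
      push_cast at this; linear_combination this)
    rw [Complex.norm_real, Real.norm_eq_abs, abs_of_neg (by linarith : r < 0)] at habs
    linarith
  · intro h0 μ hμ
    set c := (starRingEnd ℂ) μ with hc
    have hconj : c ^ 2 - (S : ℂ) * c + (P : ℂ) = 0 := by
      have := congrArg (starRingEnd ℂ) hμ
      simpa [map_sub, map_add, _root_.map_mul, map_pow, Complex.conj_ofReal] using this
    by_cases hreal : c = μ
    · -- μ is real
      have hre : ((μ.re : ℝ) : ℂ) = μ := Complex.conj_eq_iff_re.mp hreal
      set r := μ.re with hrdef
      have hroot : r ^ 2 - S * r + P = 0 := by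
        have : ((r ^ 2 - S * r + P : ℝ) : ℂ) = 0 := by push_cast; rw [hre]; linear_combination hμ
        exact_mod_cast this
      rw [← hre, Complex.norm_real, Real.norm_eq_abs, abs_le]
      constructor
      · by_contra hlt
        push_neg at hlt
        nlinarith [mul_nonneg (by linarith : (0:ℝ) ≤ -1 - r) (by nlinarith : (0:ℝ) ≤ -1 - (S - r))]
      · by_contra hgt
        push_neg at hgt
        nlinarith [mul_pos (by linarith : (0:ℝ) < r - 1) (by nlinarith : (0:ℝ) < (S - r) - 1)]
    · -- μ is not real: conj μ is the other root
      have hfac : (μ - c) * (μ + c - (S : ℂ)) = 0 := by linear_combination hμ - hconj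
      rcases mul_eq_zero.mp hfac with h | h
      · exact absurd (sub_eq_zero.mp h).symm hreal
      · have hsum : μ + c - (S : ℂ) = 0 := h
        have hprod : μ * c = (P : ℂ) := by linear_combination μ * hsum - hμ
        have hnsq : ((Complex.normSq μ : ℝ) : ℂ) = ((P : ℝ) : ℂ) := by
          rw [← Complex.mul_conj]; exact hprod
        have hnsq' : Complex.normSq μ = P := by exact_mod_cast hnsq
        have habs : ‖μ‖ ^ 2 = P := by rw [Complex.sq_norm]; exact hnsq'
        nlinarith [norm_nonneg μ]

/-- For ω > 0, h > 0, α ≥ 1/2, β ≥ 0: every complex eigenvalue of the Newmark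
amplification matrix has absolute value at most 1 iff `ω²·h²·(α/2 − β) ≤ 1`;
equivalently, when `β < α/2`, iff `h ≤ (1/ω)·√(1/(α/2 − β))`. -/
theorem newmark_spectral_stability_iff (ω h α β : ℝ)
    (hω : 0 < ω) (hh : 0 < h) (hα : 1 / 2 ≤ α) (hβ : 0 ≤ β) :
    ((∀ μ : ℂ,
        Module.End.HasEigenvalue
          (Matrix.toLin' ((NewmarkMatrix ω h α β).map Complex.ofReal)) μ →
        ‖μ‖ ≤ 1) ↔
      ω ^ 2 * h ^ 2 * (α / 2 - β) ≤ 1) ∧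
    (β < α / 2 →
      ((∀ μ : ℂ,
          Module.End.HasEigenvalue
            (Matrix.toLin' ((NewmarkMatrix ω h α β).map Complex.ofReal)) μ →
          ‖μ‖ ≤ 1) ↔
        h ≤ (1 / ω) * Real.sqrt (1 / (α / 2 - β)))) := by
  have hk : 0 < ω ^ 2 * h ^ 2 := by positivity
  have hD : (0:ℝ) < 1 + β * ω ^ 2 * h ^ 2 := by nlinarith
  have hDne : (1:ℝ) + β * ω ^ 2 * h ^ 2 ≠ 0 := ne_of_gt hD
  set S : ℝ := (2 - ω ^ 2 * h ^ 2 * (α + 1 / 2 - 2 * β)) / (1 + β * ω ^ 2 * h ^ 2) with hSdef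
  set P : ℝ := (1 + ω ^ 2 * h ^ 2 * (1 / 2 + β - α)) / (1 + β * ω ^ 2 * h ^ 2) with hPdef
  have hP1 : P ≤ 1 := by
    rw [hPdef, div_le_one hD]; nlinarith
  have hq1 : 0 < 1 - S + P := by
    have : 1 - S + P = ω ^ 2 * h ^ 2 / (1 + β * ω ^ 2 * h ^ 2) := by
      rw [hSdef, hPdef]; field_simp; ring
    rw [this]; positivity
  have h1SP : 1 + S + P = (4 - 2 * (ω ^ 2 * h ^ 2) * (α - 2 * β)) / (1 + β * ω ^ 2 * h ^ 2) := by
    rw [hSdef, hPdef]; field_simp; ring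
  -- eigenvalue characterization
  have heig : ∀ μ : ℂ,
      Module.End.HasEigenvalue
        (Matrix.toLin' ((NewmarkMatrix ω h α β).map Complex.ofReal)) μ ↔
      (μ = 0 ∨ μ ^ 2 - (S : ℂ) * μ + (P : ℂ) = 0) := by
    intro μ
    rw [eig_iff_det, newmark_det ω h α β hDne μ, neg_eq_zero, mul_eq_zero]
  have hiff : (∀ μ : ℂ,
      Module.End.HasEigenvalue
        (Matrix.toLin' ((NewmarkMatrix ω h α β).map Complex.ofReal)) μ →
      ‖μ‖ ≤ 1) ↔ 0 ≤ 1 + S + P := by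
    rw [← quad_roots_abs_le_one_iff S P hP1 hq1]
    constructor
    · intro H μ hμ
      exact H μ ((heig μ).mpr (Or.inr hμ))
    · intro H μ hμ
      rcases (heig μ).mp hμ with rfl | hq
      · simp
      · exact H μ hq
  have hfirst : (∀ μ : ℂ,
      Module.End.HasEigenvalue
        (Matrix.toLin' ((NewmarkMatrix ω h α β).map Complex.ofReal)) μ →
      ‖μ‖ ≤ 1) ↔ ω ^ 2 * h ^ 2 * (α / 2 - β) ≤ 1 := by
    rw [hiff, h1SP, le_div_iff₀ hD]
    constructor <;> intro <;> nlinarith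
  refine ⟨hfirst, fun hβα => ?_⟩
  rw [hfirst]
  have hc : 0 < α / 2 - β := by linarith
  set s := Real.sqrt (1 / (α / 2 - β)) with hs
  have hs0 : 0 ≤ s := Real.sqrt_nonneg _
  have hs2 : s ^ 2 = 1 / (α / 2 - β) := Real.sq_sqrt (by positivity)
  have hs2c : s ^ 2 * (α / 2 - β) = 1 := by rw [hs2, one_div, inv_mul_cancel₀ hc.ne']
  constructor
  · intro h1
    have hws : ω * h ≤ s := by nlinarith [mul_pos hω hh, sq_nonneg (ω * h + s)]
    have : h ≤ s / ω := by rw [le_div_iff₀ hω]; linarith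
    calc h ≤ s / ω := this
      _ = 1 / ω * s := by ring
  · intro hle
    have hws : ω * h ≤ s := by
      have : h ≤ s / ω := by rw [one_div, inv_mul_eq_div] at hle; exact hle
      rw [le_div_iff₀ hω] at this; linarith
    have h2 : ω ^ 2 * h ^ 2 ≤ s ^ 2 := by nlinarith [mul_pos hω hh]
    nlinarith [mul_nonneg (sub_nonneg.mpr h2) hc.le, hs2c]
end

section
/- Let M and K be real n×n matrices with M symmetric positive definite and K symmetric positive semidefinite, let α ≥ 1/2, β ≥ 0, and h > 0. The Newmark update for the linear system M·ẍ + K·x = 0, which sends (x, v, a) ∈ ℝⁿ × ℝⁿ × ℝⁿ to the unique (x', v', a') satisfying x' = x + h·v + h²·((1/2 − β)·a + β·a'), v' = v + h·((1 − α)·a + α·a'), and M·a' = −K·x', is a well-defined linear map on ℝ^{3n}, and all of its complex eigenvalues have absolute value at most 1 if and only if h²·(α/2 − β)·μ ≤ 1 for every eigenvalue μ of the generalized eigenvalue problem K·φ = μ·M·φ (equivalently, every eigenvalue μ of M⁻¹·K). Equivalently, writing ω_max for the largest natural frequency (ω_max² the largest such μ), spectral stability holds if and only if h·ω_max·√(α/2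 − β) ≤ 1 (automatic when β ≥ α/2). -/
open Matrix Complex TensorProduct
open scoped ComplexOrder

namespace NewmarkAux


variable {n : ℕ}

/-- Complex vector with given real and imaginary parts. -/
def cvec (y z : Fin n → ℝ) : Fin n → ℂ := fun j => ⟨y j, z j⟩

lemma cvec_eq_zero_iff {y z : Fin n → ℝ} : cvec y z = 0 ↔ y = 0 ∧ z = 0 := by
  constructor
  · intro hc
    have h : ∀ j, y j = 0 ∧ z j = 0 := fun j => by
      simpa [cvec, Complex.ext_iff] using congrFun hc j
    exact ⟨funext fun j => (h j).1, funext fun j => (h j).2⟩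
  · rintro ⟨rfl, rfl⟩
    funext j; simp [cvec]; rfl

lemma mulVec_map_cvec (A : Matrix (Fin n) (Fin n) ℝ) (y z : Fin n → ℝ) :
    (A.map (Complex.ofRealHom)) *ᵥ cvec y z = cvec (A *ᵥ y) (A *ᵥ z) := by
  funext j
  simp only [Matrix.mulVec, dotProduct, cvec, Matrix.map_apply]
  apply Complex.ext <;>
    simp [Complex.re_sum, Complex.im_sum]

lemma smul_cvec (μ : ℂ) (y z : Fin n → ℝ) :
    μ • cvec y z = cvec (μ.re • y - μ.im • z) (μ.im • y + μ.re • z) := by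
  funext j
  simp only [cvec, Pi.smul_apply, smul_eq_mul, Pi.sub_apply, Pi.add_apply]
  apply Complex.ext <;> simp [Complex.mul_re, Complex.mul_im] <;> ring

lemma neg_cvec (y z : Fin n → ℝ) : -(cvec y z) = cvec (-y) (-z) := by
  funext j
  apply Complex.ext <;> simp [cvec]



lemma map_posSemidef {A : Matrix (Fin n) (Fin n) ℝ} (hA : A.PosSemidef) :
    (A.map ⇑Complex.ofRealHom).PosSemidef := by
  obtain ⟨B, hB⟩ : ∃ B : Matrix (Fin n) (Fin n) ℝ, A = Bᴴ * B := by
    open scoped MatrixOrder in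
    exact CStarAlgebra.nonneg_iff_eq_star_mul_self.mp hA.nonneg
  have h1 : (Bᴴ).map ⇑Complex.ofRealHom = (B.map ⇑Complex.ofRealHom)ᴴ :=
    Matrix.conjTranspose_map _ (fun x => by simp)
  have h2 : A.map ⇑Complex.ofRealHom
      = (B.map ⇑Complex.ofRealHom)ᴴ * (B.map ⇑Complex.ofRealHom) := by
    rw [hB, Matrix.map_mul, h1]
  rw [h2]
  exact Matrix.posSemidef_conjTranspose_mul_self _

lemma map_det (A : Matrix (Fin n) (Fin n) ℝ) :
    (A.map ⇑Complex.ofRealHom).det = (A.det : ℂ) :=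
  (RingHom.map_det Complex.ofRealHom A).symm

lemma map_mulVec_injective {A : Matrix (Fin n) (Fin n) ℝ} (hdet : A.det ≠ 0)
    {x : Fin n → ℂ} (hx : (A.map ⇑Complex.ofRealHom) *ᵥ x = 0) : x = 0 := by
  by_contra hx0
  have h0 := Matrix.exists_mulVec_eq_zero_iff.mp ⟨x, hx0, hx⟩
  rw [map_det] at h0
  exact hdet (by exact_mod_cast h0)

/-- roots of a suitable real quadratic lie in the closed unit disk -/
lemma quad_root_abs_le_one {d b c : ℝ} (hd : 0 < d) (h1 : 0 ≤ d + b + c)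
    (h2 : 0 ≤ d - b + c) (h3 : c ≤ d) {z : ℂ}
    (hz : (d : ℂ) * z ^ 2 + (b : ℂ) * z + (c : ℂ) = 0) : ‖z‖ ≤ 1 := by
  by_cases him : z.im = 0
  · -- real root
    have hzr : z = (z.re : ℂ) := by
      apply Complex.ext <;> simp [him]
    set r := z.re with hr
    rw [hzr] at hz
    have heq : d * r ^ 2 + b * r + c = 0 := by exact_mod_cast hz
    rw [hzr, Complex.norm_real, Real.norm_eq_abs, abs_le]
    constructor
    · by_contra hgt; push_neg at hgt
      have hkey2 : (r + 1) * (d * r + c) = r * (d - b + c) := by linear_combination heq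
      have h8 : 0 ≤ d * r + c := by
        nlinarith [hkey2, mul_nonneg h2 (show (0:ℝ) ≤ -r by linarith)]
      nlinarith [mul_pos hd (show (0:ℝ) < -(r+1) by linarith)]
    · by_contra hgt; push_neg at hgt
      have hkey : (r - 1) * (c - d * r) = r * (d + b + c) := by linear_combination -heq
      have h8 : 0 ≤ c - d * r := by
        nlinarith [hkey, mul_nonneg h1 (show (0:ℝ) ≤ r by linarith)]
      nlinarith [mul_pos hd (show (0:ℝ) < r - 1 by linarith)]
  · -- genuinely complex root: conjugate also a root
    have hzc : (d : ℂ) * (starRingEnd ℂ z) ^ 2 + (b : ℂ) * (starRingEnd ℂ z) + (c : ℂ) = 0 := by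
      have h0 := congrArg (starRingEnd ℂ) hz
      simpa [map_add, _root_.map_mul, map_pow, Complex.conj_ofReal] using h0
    have hne : z - starRingEnd ℂ z ≠ 0 := by
      intro h0
      apply him
      have h1' := congrArg Complex.im h0
      simp [Complex.sub_im, Complex.conj_im] at h1'
      linarith
    have hsum : (d : ℂ) * (z + starRingEnd ℂ z) + b = 0 := by
      have hdiff : (z - starRingEnd ℂ z) * ((d : ℂ) * (z + starRingEnd ℂ z) + b) = 0 := by
        linear_combination hz - hzc
      rcases mul_eq_zero.mp hdiff with h | h
      · exact absurd h hne
      · exact h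
    have hprod : (c : ℂ) = (d : ℂ) * (z * starRingEnd ℂ z) := by
      linear_combination hz - z * hsum
    rw [Complex.mul_conj] at hprod
    have hnsq : c = d * Complex.normSq z := by exact_mod_cast hprod
    have h4 : Complex.normSq z ≤ 1 := by nlinarith
    have h5 := Complex.sq_norm z
    nlinarith [norm_nonneg z]

lemma exists_root_lt_neg_one {d b c : ℝ} (hd : 0 < d) (h2 : d - b + c < 0) :
    ∃ r : ℝ, r < -1 ∧ d * r ^ 2 + b * r + c = 0 := by
  have hdisc : 0 < b ^ 2 - 4 * d * c := by nlinarith [sq_nonneg (2 * d - b)]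
  set s := Real.sqrt (b ^ 2 - 4 * d * c) with hs
  have hs0 : 0 < s := Real.sqrt_pos.mpr hdisc
  have hssq : s ^ 2 = b ^ 2 - 4 * d * c := Real.sq_sqrt hdisc.le
  refine ⟨(-b - s) / (2 * d), ?_, ?_⟩
  · rw [div_lt_iff₀ (by linarith)]
    have : 2 * d - b < s := by nlinarith
    linarith
  · field_simp
    nlinarith



variable {V : Type*} [AddCommGroup V] [Module ℝ V]

/-- real part projection of a complexified module -/
noncomputable def reP (V : Type*) [AddCommGroup V] [Module ℝ V] : (ℂ ⊗[ℝ] V) →ₗ[ℝ] V :=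
  (TensorProduct.lid ℝ V).toLinearMap ∘ₗ LinearMap.rTensor V Complex.reLm

/-- imaginary part projection of a complexified module -/
noncomputable def imP (V : Type*) [AddCommGroup V] [Module ℝ V] : (ℂ ⊗[ℝ] V) →ₗ[ℝ] V :=
  (TensorProduct.lid ℝ V).toLinearMap ∘ₗ LinearMap.rTensor V Complex.imLm

@[simp] lemma reP_tmul (c : ℂ) (v : V) : reP V (c ⊗ₜ[ℝ] v) = c.re • v := by
  simp [reP]

@[simp] lemma imP_tmul (c : ℂ) (v : V) : imP V (c ⊗ₜ[ℝ] v) = c.im • v := by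
  simp [imP]

lemma tensor_decomp (z : ℂ ⊗[ℝ] V) :
    z = (1 : ℂ) ⊗ₜ[ℝ] (reP V z) + Complex.I ⊗ₜ[ℝ] (imP V z) := by
  induction z using TensorProduct.induction_on with
  | zero => simp
  | tmul c v =>
      rw [reP_tmul, imP_tmul, TensorProduct.tmul_smul, TensorProduct.tmul_smul,
        TensorProduct.smul_tmul', TensorProduct.smul_tmul', ← TensorProduct.add_tmul]
      congr 1
      simp [Complex.real_smul]
  | add x y hx hy =>
      rw [map_add, map_add, TensorProduct.tmul_add, TensorProduct.tmul_add]
      calc x + y = ((1:ℂ) ⊗ₜ[ℝ] reP V x + Complex.I ⊗ₜ[ℝ] imP V x)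
            + ((1:ℂ) ⊗ₜ[ℝ] reP V y + Complex.I ⊗ₜ[ℝ] imP V y) := by rw [← hx, ← hy]
        _ = _ := by abel

lemma csmul_tmul (μ c : ℂ) (v : V) : μ • (c ⊗ₜ[ℝ] v) = (μ * c) ⊗ₜ[ℝ] v := by
  rw [TensorProduct.smul_tmul', smul_eq_mul]

/-- extract real equations from a complex eigen-equation -/
lemma baseChange_eigen_real {L : V →ₗ[ℝ] V} {μ : ℂ} {z : ℂ ⊗[ℝ] V}
    (hz : LinearMap.baseChange ℂ L z = μ • z) :
    L (reP V z) = μ.re • reP V z - μ.im • imP V z ∧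
    L (imP V z) = μ.im • reP V z + μ.re • imP V z := by
  set u := reP V z with hu
  set w := imP V z with hw
  have hd := tensor_decomp z
  have h1 : LinearMap.baseChange ℂ L z = (1:ℂ) ⊗ₜ[ℝ] (L u) + Complex.I ⊗ₜ[ℝ] (L w) := by
    conv_lhs => rw [hd]
    simp
    rfl
  have h2 : μ • z = μ ⊗ₜ[ℝ] u + (μ * Complex.I) ⊗ₜ[ℝ] w := by
    conv_lhs => rw [hd]
    rw [smul_add, csmul_tmul, csmul_tmul, mul_one]
  have hz' : (1:ℂ) ⊗ₜ[ℝ] (L u) + Complex.I ⊗ₜ[ℝ] (L w)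
      = μ ⊗ₜ[ℝ] u + (μ * Complex.I) ⊗ₜ[ℝ] w := by rw [← h1, hz, h2]
  constructor
  · have := congrArg (reP V) hz'
    simpa [Complex.mul_I_re, sub_eq_add_neg, neg_smul] using this
  · have := congrArg (imP V) hz'
    simpa [Complex.mul_I_im] using this

lemma hasEigenvalue_baseChange_of_real {L : V →ₗ[ℝ] V} {r : ℝ} {zr : V}
    (hzr : zr ≠ 0) (hL : L zr = r • zr) :
    Module.End.HasEigenvalue (LinearMap.baseChange ℂ L) (r : ℂ) := by
  rw [Module.End.hasEigenvalue_iff]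
  intro hbot
  have hmem : (1:ℂ) ⊗ₜ[ℝ] zr ∈ Module.End.eigenspace (LinearMap.baseChange ℂ L) (r : ℂ) := by
    rw [Module.End.mem_eigenspace_iff]
    rw [LinearMap.baseChange_tmul, hL, TensorProduct.tmul_smul]
    rw [show ((r : ℂ)) = algebraMap ℝ ℂ r from rfl, algebraMap_smul]
  rw [hbot, Submodule.mem_bot] at hmem
  have := congrArg (reP V) hmem
  simp at this
  exact hzr this


lemma real_pair_nonneg {M K : Matrix (Fin n) (Fin n) ℝ} (hM : M.PosDef) (hK : K.PosSemidef)
    {μ : ℝ} {φ : Fin n → ℝ} (hφ : φ ≠ 0) (he : K *ᵥ φ = μ • (M *ᵥ φ)) : 0 ≤ μ := by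
  have h1 : 0 ≤ φ ⬝ᵥ (K *ᵥ φ) := by simpa using hK.dotProduct_mulVec_nonneg φ
  have h2 : 0 < φ ⬝ᵥ (M *ᵥ φ) := by simpa using hM.dotProduct_mulVec_pos hφ
  have h3 : φ ⬝ᵥ (K *ᵥ φ) = μ * (φ ⬝ᵥ (M *ᵥ φ)) := by
    rw [he, dotProduct_smul]; rfl
  nlinarith

lemma gen_eigenpair_real
    {M K : Matrix (Fin n) (Fin n) ℝ} (hM : M.PosDef) (hK : K.PosSemidef)
    {x : Fin n → ℂ} (hx : x ≠ 0) {γ : ℂ}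
    (heig : (K.map ⇑Complex.ofRealHom) *ᵥ x = γ • ((M.map ⇑Complex.ofRealHom) *ᵥ x)) :
    ∃ μ : ℝ, 0 ≤ μ ∧ γ = (μ : ℂ) ∧
      ∃ φ : Fin n → ℝ, φ ≠ 0 ∧ K *ᵥ φ = μ • (M *ᵥ φ) := by
  set Mc := M.map ⇑Complex.ofRealHom with hMcd
  set Kc := K.map ⇑Complex.ofRealHom with hKcd
  have hMc : Mc.PosSemidef := map_posSemidef hM.posSemidef
  have hKc : Kc.PosSemidef := map_posSemidef hK
  have hdetM : M.det ≠ 0 := hM.det_pos.ne'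
  set mq := star x ⬝ᵥ (Mc *ᵥ x) with hmqd
  set kq := star x ⬝ᵥ (Kc *ᵥ x) with hkqd
  have hmq0 : 0 ≤ mq := hMc.dotProduct_mulVec_nonneg x
  have hkq0 : 0 ≤ kq := hKc.dotProduct_mulVec_nonneg x
  have hmqne : mq ≠ 0 := by
    intro h0
    exact hx (map_mulVec_injective hdetM ((hMc.dotProduct_mulVec_zero_iff x).mp h0))
  obtain ⟨hmqre, hmqim⟩ := Complex.nonneg_iff.mp hmq0
  obtain ⟨hkqre, hkqim⟩ := Complex.nonneg_iff.mp hkq0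
  have hmqc : mq = (mq.re : ℂ) := by apply Complex.ext <;> simp [← hmqim]
  have hkqc : kq = (kq.re : ℂ) := by apply Complex.ext <;> simp [← hkqim]
  have hmqrepos : 0 < mq.re := by
    rcases lt_or_eq_of_le hmqre with h' | h'
    · exact h'
    · exact absurd (by rw [hmqc, ← h']; simp) hmqne
  have hkqγ : kq = γ * mq := by
    rw [hkqd, heig, dotProduct_smul]; rfl
  set μ : ℝ := kq.re / mq.re with hμd
  have hγ : γ = (μ : ℂ) := by
    have : γ = kq / mq := by
      field_simp [hkqγ]
      exact hkqγ.symm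
    rw [this, hkqc, hmqc, hμd]
    push_cast
    ring
  refine ⟨μ, div_nonneg hkqre hmqrepos.le, hγ, ?_⟩
  -- real eigenvector via determinant
  set C : Matrix (Fin n) (Fin n) ℝ := K - μ • M with hCd
  have hCmap : C.map ⇑Complex.ofRealHom = Kc - (μ : ℂ) • Mc := by
    ext i j
    simp [hCd, hMcd, hKcd, Matrix.map_apply, Matrix.sub_apply, Matrix.smul_apply]
  have hCx : (C.map ⇑Complex.ofRealHom) *ᵥ x = 0 := by
    rw [hCmap, Matrix.sub_mulVec, Matrix.smul_mulVec, heig, hγ, sub_self]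
  have hdetC : C.det = 0 := by
    have h0 := Matrix.exists_mulVec_eq_zero_iff.mp ⟨x, hx, hCx⟩
    rw [map_det] at h0
    exact_mod_cast h0
  obtain ⟨φ, hφ0, hφ⟩ := Matrix.exists_mulVec_eq_zero_iff.mpr hdetC
  refine ⟨φ, hφ0, ?_⟩
  rw [hCd, Matrix.sub_mulVec, Matrix.smul_mulVec, sub_eq_zero] at hφ
  exact hφ


section Part1
variable {M K : Matrix (Fin n) (Fin n) ℝ} {α β h : ℝ}

lemma smul_posSemidef (hK : K.PosSemidef) {c : ℝ} (hc : 0 ≤ c) : (c • K).PosSemidef := by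
  exact hK.smul hc

lemma newmark_existsUnique (hM : M.PosDef) (hK : K.PosSemidef)
    (hβ : 0 ≤ β) (x v a : Fin n → ℝ) :
    ∃! p : (Fin n → ℝ) × (Fin n → ℝ) × (Fin n → ℝ),
      p.1 = x + h • v + h ^ 2 • ((1 / 2 - β) • a + β • p.2.2) ∧
      p.2.1 = v + h • ((1 - α) • a + α • p.2.2) ∧
      M.mulVec p.2.2 = -(K.mulVec p.1) := by
  set N : Matrix (Fin n) (Fin n) ℝ := M + (h ^ 2 * β) • K with hN
  have hNpd : N.PosDef := hM.add_posSemidef (smul_posSemidef hK (by positivity))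
  have hNunit : IsUnit N.det := hNpd.det_pos.ne'.isUnit
  have hNinv : N⁻¹ * N = 1 := Matrix.nonsing_inv_mul N hNunit
  have hNinv' : N * N⁻¹ = 1 := Matrix.mul_nonsing_inv N hNunit
  set s : Fin n → ℝ := x + h • v + (h ^ 2 * (1 / 2 - β)) • a with hs
  set a' : Fin n → ℝ := N⁻¹ *ᵥ (-(K *ᵥ s)) with ha'
  -- key : N *ᵥ y = -(K *ᵥ s) ↔ relates to unique a'
  have hNa' : N *ᵥ a' = -(K *ᵥ s) := by
    rw [ha', Matrix.mulVec_mulVec, hNinv', Matrix.one_mulVec]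
  clear_value s a'
  refine ⟨⟨s + (h ^ 2 * β) • a', v + h • ((1 - α) • a + α • a'), a'⟩, ⟨?_, rfl, ?_⟩, ?_⟩
  · show s + (h ^ 2 * β) • a' = x + h • v + h ^ 2 • ((1 / 2 - β) • a + β • a')
    rw [hs, smul_add, smul_smul, smul_smul]
    abel
  · show M *ᵥ a' = -(K *ᵥ (s + (h ^ 2 * β) • a'))
    have h1 : M *ᵥ a' = N *ᵥ a' - (h ^ 2 * β) • (K *ᵥ a') := by
      rw [hN, Matrix.add_mulVec, Matrix.smul_mulVec]
      abel
    rw [h1, hNa', Matrix.mulVec_add, Matrix.mulVec_smul]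
    abel
  · rintro q ⟨e1, e2, e3⟩
    have hq1' : q.1 = s + (h ^ 2 * β) • q.2.2 := by
      rw [e1, hs, smul_add, smul_smul, smul_smul]
      abel
    have hq3 : N *ᵥ q.2.2 = -(K *ᵥ s) := by
      rw [hN, Matrix.add_mulVec, Matrix.smul_mulVec, e3, hq1',
        Matrix.mulVec_add, Matrix.mulVec_smul]
      abel
    have hq3' : q.2.2 = a' := by
      have h2 : N⁻¹ *ᵥ (N *ᵥ q.2.2) = N⁻¹ *ᵥ (N *ᵥ a') := by rw [hq3, hNa']
      rwa [Matrix.mulVec_mulVec, Matrix.mulVec_mulVec, hNinv, Matrix.one_mulVec,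
        Matrix.one_mulVec] at h2
    refine Prod.ext ?_ (Prod.ext ?_ ?_)
    · rw [hq1', hq3']
    · rw [e2, hq3']
    · exact hq3'

end Part1

lemma newmark_coeffs {α β h μr : ℝ} (hα : 1/2 ≤ α) (hβ : 0 ≤ β) (hμr0 : 0 ≤ μr) (hh : 0 < h)
    (hcnd : h^2*(α/2-β)*μr ≤ 1) :
    0 < 1 + β*(h^2*μr)
    ∧ 0 ≤ (1 + β*(h^2*μr)) + ((h^2*μr)*(α+1/2-2*β)-2) + (1+(h^2*μr)*(1/2+β-α))
    ∧ 0 ≤ (1 + β*(h^2*μr)) - ((h^2*μr)*(α+1/2-2*β)-2) + (1+(h^2*μr)*(1/2+β-α))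
    ∧ (1+(h^2*μr)*(1/2+β-α)) ≤ 1 + β*(h^2*μr) := by
  have hκ0 : 0 ≤ h^2*μr := by positivity
  refine ⟨by nlinarith [mul_nonneg hβ hκ0], by nlinarith, by nlinarith,
    by nlinarith [mul_nonneg hκ0 (by linarith : (0:ℝ) ≤ α - 1/2)]⟩

section Core
variable {M K : Matrix (Fin n) (Fin n) ℝ} {α β h : ℝ}

lemma eigen_abs_le_one (hM : M.PosDef) (hK : K.PosSemidef)
    (hα : 1 / 2 ≤ α) (hβ : 0 ≤ β) (hh : 0 < h)
    {L : ((Fin n → ℝ) × (Fin n → ℝ) × (Fin n → ℝ)) →ₗ[ℝ]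
         ((Fin n → ℝ) × (Fin n → ℝ) × (Fin n → ℝ))}
    (hL : ∀ x v a : Fin n → ℝ,
        (L (x, v, a)).1 =
          x + h • v + h ^ 2 • ((1 / 2 - β) • a + β • (L (x, v, a)).2.2) ∧
        (L (x, v, a)).2.1 = v + h • ((1 - α) • a + α • (L (x, v, a)).2.2) ∧
        M.mulVec (L (x, v, a)).2.2 = -(K.mulVec (L (x, v, a)).1))
    (hcond : ∀ μ : ℝ, (∃ φ : Fin n → ℝ, φ ≠ 0 ∧ K.mulVec φ = μ • M.mulVec φ) →
        h ^ 2 * (α / 2 - β) * μ ≤ 1)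
    {μ : ℂ} (hμ : Module.End.HasEigenvalue (LinearMap.baseChange ℂ L) μ) :
    ‖μ‖ ≤ 1 := by
  by_cases hμ0 : μ = 0
  · simp [hμ0]
  rw [Module.End.hasEigenvalue_iff] at hμ
  obtain ⟨z, hzmem, hz0⟩ := Submodule.exists_mem_ne_zero_of_ne_bot hμ
  rw [Module.End.mem_eigenspace_iff] at hzmem
  obtain ⟨hu, hw⟩ := baseChange_eigen_real hzmem
  set u := reP _ z with hud
  set w := imP _ z with hwd
  -- real component equations
  obtain ⟨hu1, hu2, hu3⟩ := hL u.1 u.2.1 u.2.2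
  obtain ⟨hw1, hw2, hw3⟩ := hL w.1 w.2.1 w.2.2
  have hu' : L (u.1, u.2.1, u.2.2) = μ.re • u - μ.im • w := hu
  have hw' : L (w.1, w.2.1, w.2.2) = μ.im • u + μ.re • w := hw
  rw [hu'] at hu1 hu2 hu3
  rw [hw'] at hw1 hw2 hw3
  -- complex vectors
  set xc := cvec u.1 w.1 with hxcd
  set vc := cvec u.2.1 w.2.1 with hvcd
  set ac := cvec u.2.2 w.2.2 with hacd
  have E1 : ∀ j, μ * xc j = xc j + (h : ℂ) * vc j
      + (h : ℂ) ^ 2 * (((1:ℂ)/2 - (β:ℂ)) * ac j + (β:ℂ) * (μ * ac j)) := by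
    intro j
    have A := congrFun hu1 j
    have B := congrFun hw1 j
    simp only [Prod.fst_sub, Prod.smul_fst, Prod.snd_sub, Prod.smul_snd, Prod.fst_add,
      Prod.snd_add, Pi.add_apply, Pi.sub_apply, Pi.smul_apply, smul_eq_mul] at A B
    show μ * ⟨u.1 j, w.1 j⟩ = (⟨u.1 j, w.1 j⟩ : ℂ) + (h : ℂ) * ⟨u.2.1 j, w.2.1 j⟩
      + (h : ℂ) ^ 2 * (((1:ℂ)/2 - (β:ℂ)) * ⟨u.2.2 j, w.2.2 j⟩
        + (β:ℂ) * (μ * ⟨u.2.2 j, w.2.2 j⟩))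
    apply Complex.ext
    · simp [Complex.mul_re, Complex.mul_im, pow_two]
      linear_combination A
    · simp [Complex.mul_re, Complex.mul_im, pow_two]
      linear_combination B
  have E2 : ∀ j, μ * vc j = vc j
      + (h : ℂ) * (((1:ℂ) - (α:ℂ)) * ac j + (α:ℂ) * (μ * ac j)) := by
    intro j
    have A := congrFun hu2 j
    have B := congrFun hw2 j
    simp only [Prod.fst_sub, Prod.smul_fst, Prod.snd_sub, Prod.smul_snd, Prod.fst_add,
      Prod.snd_add, Pi.add_apply, Pi.sub_apply, Pi.smul_apply, smul_eq_mul] at A B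
    show μ * ⟨u.2.1 j, w.2.1 j⟩ = (⟨u.2.1 j, w.2.1 j⟩ : ℂ)
      + (h : ℂ) * (((1:ℂ) - (α:ℂ)) * ⟨u.2.2 j, w.2.2 j⟩
        + (α:ℂ) * (μ * ⟨u.2.2 j, w.2.2 j⟩))
    apply Complex.ext
    · simp [Complex.mul_re, Complex.mul_im]
      linear_combination A
    · simp [Complex.mul_re, Complex.mul_im]
      linear_combination B
  have E3 : (M.map ⇑Complex.ofRealHom) *ᵥ (μ • ac) = -((K.map ⇑Complex.ofRealHom) *ᵥ (μ • xc)) := by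
    have hcu : M *ᵥ (μ.re • u.2.2 - μ.im • w.2.2) = -(K *ᵥ (μ.re • u.1 - μ.im • w.1)) := by
      simpa only [Prod.fst_sub, Prod.smul_fst, Prod.snd_sub, Prod.smul_snd, Prod.fst_add,
        Prod.snd_add] using hu3
    have hcw : M *ᵥ (μ.im • u.2.2 + μ.re • w.2.2) = -(K *ᵥ (μ.im • u.1 + μ.re • w.1)) := by
      simpa only [Prod.fst_sub, Prod.smul_fst, Prod.snd_sub, Prod.smul_snd, Prod.fst_add,
        Prod.snd_add] using hw3
    rw [hacd, hxcd, smul_cvec, smul_cvec, mulVec_map_cvec, mulVec_map_cvec, neg_cvec, hcu, hcw]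
  have E3' : (M.map ⇑Complex.ofRealHom) *ᵥ ac = -((K.map ⇑Complex.ofRealHom) *ᵥ xc) := by
    have h1 : μ • ((M.map ⇑Complex.ofRealHom) *ᵥ ac)
        = μ • (-((K.map ⇑Complex.ofRealHom) *ᵥ xc)) := by
      rw [← Matrix.mulVec_smul, E3, Matrix.mulVec_smul, smul_neg]
    exact smul_right_injective _ hμ0 h1
  have E2' : ∀ j, (μ - 1) * vc j = (h : ℂ) * (((1:ℂ) - (α:ℂ)) + (α:ℂ) * μ) * ac j := by
    intro j
    linear_combination E2 j
  -- dichotomy on xc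
  by_cases hxc0 : xc = 0
  · -- then ac = 0 and μ = 1
    have hac0 : ac = 0 := by
      apply map_mulVec_injective hM.det_pos.ne'
      rw [E3', hxc0, Matrix.mulVec_zero, neg_zero]
    have hvc0 : vc ≠ 0 := by
      intro hvc
      obtain ⟨hx1, hx2⟩ := cvec_eq_zero_iff.mp hxc0
      obtain ⟨hv1, hv2⟩ := cvec_eq_zero_iff.mp hvc
      obtain ⟨ha1, ha2⟩ := cvec_eq_zero_iff.mp hac0
      apply hz0
      rw [tensor_decomp z, ← hud, ← hwd]
      have hu0 : u = 0 := by
        refine Prod.ext hx1 (Prod.ext hv1 ha1)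
      have hw0 : w = 0 := by
        refine Prod.ext hx2 (Prod.ext hv2 ha2)
      rw [hu0, hw0]
      simp
    obtain ⟨j, hj⟩ := Function.ne_iff.mp hvc0
    have := E2' j
    rw [hac0] at this
    simp only [Pi.zero_apply, mul_zero] at this
    have hμ1 : μ = 1 := by
      rcases mul_eq_zero.mp this with h' | h'
      · exact sub_eq_zero.mp h'
      · exact absurd h' hj
    simp [hμ1]
  · -- xc ≠ 0 : generalized eigenvector analysis
    set cpol : ℂ := ((1:ℂ) - (α:ℂ)) + (α:ℂ) * μ + (((1:ℂ)/2 - (β:ℂ)) + (β:ℂ) * μ) * (μ - 1)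
      with hcpold
    have E1' : ∀ j, (μ - 1) ^ 2 * xc j = (h : ℂ) ^ 2 * cpol * ac j := by
      intro j
      rw [hcpold]
      linear_combination (μ - 1) * E1 j + (h : ℂ) * E2' j
    obtain ⟨j0, hj0⟩ := Function.ne_iff.mp hxc0
    by_cases hc0 : cpol = 0
    · have h1 := E1' j0
      rw [hc0, mul_zero, zero_mul] at h1
      have hμ1 : μ = 1 := by
        rcases mul_eq_zero.mp h1 with h' | h'
        · exact sub_eq_zero.mp (pow_eq_zero_iff (n := 2) (by norm_num) |>.mp h')
        · exact absurd h' hj0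
      simp [hμ1]
    · have hh2c : (h : ℂ) ^ 2 * cpol ≠ 0 := by
        apply mul_ne_zero _ hc0
        simpa using Complex.ofReal_ne_zero.mpr hh.ne'
      have hδ : ac = ((μ - 1) ^ 2 / ((h : ℂ) ^ 2 * cpol)) • xc := by
        funext j
        rw [Pi.smul_apply, smul_eq_mul]
        field_simp
        linear_combination -E1' j
      have heig : (K.map ⇑Complex.ofRealHom) *ᵥ xc
          = (-((μ - 1) ^ 2 / ((h : ℂ) ^ 2 * cpol))) • ((M.map ⇑Complex.ofRealHom) *ᵥ xc) := by
        have h1 : (M.map ⇑Complex.ofRealHom) *ᵥ ac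
            = ((μ - 1) ^ 2 / ((h : ℂ) ^ 2 * cpol)) • ((M.map ⇑Complex.ofRealHom) *ᵥ xc) := by
          rw [hδ, Matrix.mulVec_smul]
        rw [← neg_neg ((K.map ⇑Complex.ofRealHom) *ᵥ xc), ← E3', h1, neg_smul]
      obtain ⟨μr, hμr0, hγeq, φ, hφ0, hφ⟩ := gen_eigenpair_real hM hK hxc0 heig
      have hcnd := hcond μr ⟨φ, hφ0, hφ⟩
      have hquad : (μ - 1) ^ 2 + (h : ℂ) ^ 2 * (μr : ℂ) * cpol = 0 := by
        have h1 : -((μ - 1) ^ 2 / ((h : ℂ) ^ 2 * cpol)) = (μr : ℂ) := hγeq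
        field_simp at h1
        linear_combination -h1
      have hκ0 : 0 ≤ h ^ 2 * μr := by positivity
      have hzq : ((1 + β * (h ^ 2 * μr) : ℝ) : ℂ) * μ ^ 2
          + (((h ^ 2 * μr) * (α + 1/2 - 2*β) - 2 : ℝ) : ℂ) * μ
          + ((1 + (h ^ 2 * μr) * (1/2 + β - α) : ℝ) : ℂ) = 0 := by
        rw [hcpold] at hquad
        push_cast
        linear_combination hquad
      obtain ⟨c1, c2, c3, c4⟩ := newmark_coeffs hα hβ hμr0 hh hcnd
      exact quad_root_abs_le_one c1 c2 c3 c4 hzq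
lemma exists_unstable (hM : M.PosDef) (hK : K.PosSemidef)
    (hβ : 0 ≤ β) (hh : 0 < h)
    {L : ((Fin n → ℝ) × (Fin n → ℝ) × (Fin n → ℝ)) →ₗ[ℝ]
         ((Fin n → ℝ) × (Fin n → ℝ) × (Fin n → ℝ))}
    (hL : ∀ x v a : Fin n → ℝ,
        (L (x, v, a)).1 =
          x + h • v + h ^ 2 • ((1 / 2 - β) • a + β • (L (x, v, a)).2.2) ∧
        (L (x, v, a)).2.1 = v + h • ((1 - α) • a + α • (L (x, v, a)).2.2) ∧
        M.mulVec (L (x, v, a)).2.2 = -(K.mulVec (L (x, v, a)).1))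
    {μr : ℝ} {φ : Fin n → ℝ} (hφ0 : φ ≠ 0) (hφ : K.mulVec φ = μr • M.mulVec φ)
    (hbad : 1 < h ^ 2 * (α / 2 - β) * μr) :
    ∃ μ : ℂ, Module.End.HasEigenvalue (LinearMap.baseChange ℂ L) μ ∧ 1 < ‖μ‖ := by
  have hμr0 : 0 ≤ μr := real_pair_nonneg hM hK hφ0 hφ
  have hκ0 : (0:ℝ) ≤ h ^ 2 * μr := by positivity
  have hd : 0 < 1 + β * (h ^ 2 * μr) := by nlinarith [mul_nonneg hβ hκ0]
  have hdb : (1 + β*(h^2*μr)) - ((h^2*μr)*(α+1/2-2*β)-2) + (1+(h^2*μr)*(1/2+β-α)) < 0 := by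
    nlinarith
  obtain ⟨r, hr, hroot⟩ := exists_root_lt_neg_one hd hdb
  set v0 : Fin n → ℝ := (h⁻¹ * (r - 1 + h^2*μr*((1/2-β) + β*r))) • φ with hv0d
  set a0 : Fin n → ℝ := -(μr • φ) with ha0d
  have hsat : ((r • φ, r • v0, r • a0) : (Fin n → ℝ) × (Fin n → ℝ) × (Fin n → ℝ)).1
        = φ + h • v0 + h ^ 2 • ((1 / 2 - β) • a0 + β • ((r • φ, r • v0, r • a0) : (Fin n → ℝ) × (Fin n → ℝ) × (Fin n → ℝ)).2.2) ∧
      ((r • φ, r • v0, r • a0) : (Fin n → ℝ) × (Fin n → ℝ) × (Fin n → ℝ)).2.1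
        = v0 + h • ((1 - α) • a0 + α • ((r • φ, r • v0, r • a0) : (Fin n → ℝ) × (Fin n → ℝ) × (Fin n → ℝ)).2.2) ∧
      M.mulVec ((r • φ, r • v0, r • a0) : (Fin n → ℝ) × (Fin n → ℝ) × (Fin n → ℝ)).2.2
        = -(K.mulVec ((r • φ, r • v0, r • a0) : (Fin n → ℝ) × (Fin n → ℝ) × (Fin n → ℝ)).1) := by
    refine ⟨?_, ?_, ?_⟩
    · funext j
      simp only [hv0d, ha0d, Pi.add_apply, Pi.smul_apply, Pi.neg_apply, smul_eq_mul]
      field_simp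
      ring
    · funext j
      simp only [hv0d, ha0d, Pi.add_apply, Pi.smul_apply, Pi.neg_apply, smul_eq_mul]
      field_simp
      linear_combination (2 * φ j) * hroot
    · show M *ᵥ (r • a0) = -(K *ᵥ (r • φ))
      rw [Matrix.mulVec_smul, Matrix.mulVec_smul, ha0d]
      rw [show M *ᵥ (-(μr • φ)) = -(μr • (M *ᵥ φ)) by rw [Matrix.mulVec_neg, Matrix.mulVec_smul]]
      rw [← hφ]
      rw [smul_neg]
  have hLeq : L (φ, v0, a0) = (r • φ, r • v0, r • a0) := by
    obtain ⟨p, hp, hup⟩ := newmark_existsUnique (α := α) (h := h) hM hK hβ φ v0 a0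
    have h1 := hup (L (φ, v0, a0)) (hL φ v0 a0)
    have h2 := hup ((r • φ, r • v0, r • a0)) hsat
    rw [h1, h2]
  have hz : L (φ, v0, a0) = r • ((φ, v0, a0) : (Fin n → ℝ) × (Fin n → ℝ) × (Fin n → ℝ)) := by
    rw [hLeq]
    rfl
  have hz0 : ((φ, v0, a0) : (Fin n → ℝ) × (Fin n → ℝ) × (Fin n → ℝ)) ≠ 0 := by
    intro h0
    exact hφ0 (congrArg Prod.fst h0)
  refine ⟨(r : ℂ), hasEigenvalue_baseChange_of_real hz0 hz, ?_⟩
  rw [Complex.norm_real, Real.norm_eq_abs, abs_of_neg (by linarith)]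
  linarith

end Core

end NewmarkAux

open Matrix

/-- Newmark method for the n-DOF undamped linear system `M·ẍ + K·x = 0`, with
M symmetric positive definite and K symmetric positive semidefinite, α ≥ 1/2,
β ≥ 0, stepsize h > 0.  (1) The update sending `(x, v, a)` to the unique
`(x', v', a')` with `x' = x + h·v + h²·((1/2 − β)·a + β·a')`,
`v' = v + h·((1 − α)·a + α·a')`, `M·a' = −K·x'` is well defined; (2) any linear
map `L` realizing this update is spectrally stable (all complex eigenvalues of
absolute value ≤ 1) iff `h²·(α/2 − β)·μ ≤ 1` for every generalized eigenvalue
μ of `K·φ = μ·M·φ`, equivalently iff `h·ω_max·√(α/2 − β) ≤ 1` where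
`ω_max²` is the largest such μ. -/
theorem newmark_multidof_stability
    {n : ℕ} (M K : Matrix (Fin n) (Fin n) ℝ)
    (hM : M.PosDef) (hK : K.PosSemidef)
    (α β h : ℝ) (hα : 1 / 2 ≤ α) (hβ : 0 ≤ β) (hh : 0 < h) :
    (∀ x v a : Fin n → ℝ,
      ∃! p : (Fin n → ℝ) × (Fin n → ℝ) × (Fin n → ℝ),
        p.1 = x + h • v + h ^ 2 • ((1 / 2 - β) • a + β • p.2.2) ∧
        p.2.1 = v + h • ((1 - α) • a + α • p.2.2) ∧
        M.mulVec p.2.2 = -(K.mulVec p.1)) ∧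
    (∀ L : ((Fin n → ℝ) × (Fin n → ℝ) × (Fin n → ℝ)) →ₗ[ℝ]
           ((Fin n → ℝ) × (Fin n → ℝ) × (Fin n → ℝ)),
      (∀ x v a : Fin n → ℝ,
        (L (x, v, a)).1 =
          x + h • v + h ^ 2 • ((1 / 2 - β) • a + β • (L (x, v, a)).2.2) ∧
        (L (x, v, a)).2.1 = v + h • ((1 - α) • a + α • (L (x, v, a)).2.2) ∧
        M.mulVec (L (x, v, a)).2.2 = -(K.mulVec (L (x, v, a)).1)) →
      (((∀ μ : ℂ,
            Module.End.HasEigenvalue (LinearMap.baseChange ℂ L) μ →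
            ‖μ‖ ≤ 1) ↔
          (∀ μ : ℝ, (∃ φ : Fin n → ℝ, φ ≠ 0 ∧ K.mulVec φ = μ • M.mulVec φ) →
            h ^ 2 * (α / 2 - β) * μ ≤ 1)) ∧
        (∀ ωmax : ℝ, 0 ≤ ωmax →
          (∃ φ : Fin n → ℝ, φ ≠ 0 ∧ K.mulVec φ = ωmax ^ 2 • M.mulVec φ) →
          (∀ μ : ℝ, (∃ φ : Fin n → ℝ, φ ≠ 0 ∧ K.mulVec φ = μ • M.mulVec φ) →
            μ ≤ ωmax ^ 2) →
          ((∀ μ : ℂ,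
              Module.End.HasEigenvalue (LinearMap.baseChange ℂ L) μ →
              ‖μ‖ ≤ 1) ↔
            h * ωmax * Real.sqrt (α / 2 - β) ≤ 1)))) := by
  constructor
  · intro x v a
    exact NewmarkAux.newmark_existsUnique (α := α) (h := h) hM hK hβ x v a
  · intro L hL
    have main_iff : (∀ μ : ℂ, Module.End.HasEigenvalue (LinearMap.baseChange ℂ L) μ →
        ‖μ‖ ≤ 1) ↔
        (∀ μ : ℝ, (∃ φ : Fin n → ℝ, φ ≠ 0 ∧ K.mulVec φ = μ • M.mulVec φ) →
          h ^ 2 * (α / 2 - β) * μ ≤ 1) := by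
      constructor
      · intro hstab μr hμr
        obtain ⟨φ, hφ0, hφ⟩ := hμr
        by_contra hbad
        push_neg at hbad
        obtain ⟨μc, heig, habs⟩ := NewmarkAux.exists_unstable hM hK hβ hh hL hφ0 hφ hbad
        exact absurd (hstab μc heig) (not_le.mpr habs)
      · intro hcond μc hμc
        exact NewmarkAux.eigen_abs_le_one hM hK hα hβ hh hL hcond hμc
    refine ⟨main_iff, ?_⟩
    intro ωmax hω0 hpair hmax
    rw [main_iff]
    constructor
    · intro hcnd
      have h1 := hcnd (ωmax ^ 2) hpair
      by_cases hab : α / 2 - β ≤ 0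
      · rw [Real.sqrt_eq_zero'.mpr hab, mul_zero]
        norm_num
      · push_neg at hab
        have hs : Real.sqrt (α / 2 - β) ^ 2 = α / 2 - β := Real.sq_sqrt hab.le
        have h3 : (h * ωmax * Real.sqrt (α / 2 - β)) ^ 2 = h ^ 2 * (α / 2 - β) * ωmax ^ 2 := by
          rw [mul_pow, mul_pow, hs]; ring
        have hx0 : 0 ≤ h * ωmax * Real.sqrt (α / 2 - β) := by positivity
        nlinarith [h1, h3, hx0]
    · intro hle μr hμr
      obtain ⟨φ, hφ0, hφ⟩ := hμr
      have hμr0 : 0 ≤ μr := NewmarkAux.real_pair_nonneg hM hK hφ0 hφ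
      have hμrle : μr ≤ ωmax ^ 2 := hmax μr ⟨φ, hφ0, hφ⟩
      by_cases hab : α / 2 - β ≤ 0
      · have h2 : 0 ≤ h ^ 2 * μr := by positivity
        nlinarith
      · push_neg at hab
        have hcoef : 0 ≤ h ^ 2 * (α / 2 - β) := mul_nonneg (sq_nonneg h) hab.le
        have h2 : h ^ 2 * (α / 2 - β) * μr ≤ h ^ 2 * (α / 2 - β) * ωmax ^ 2 :=
          mul_le_mul_of_nonneg_left hμrle hcoef
        have hs : Real.sqrt (α / 2 - β) ^ 2 = α / 2 - β := Real.sq_sqrt hab.le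
        have h3 : h ^ 2 * (α / 2 - β) * ωmax ^ 2 = (h * ωmax * Real.sqrt (α / 2 - β)) ^ 2 := by
          rw [mul_pow, mul_pow, hs]; ring
        have hx0 : 0 ≤ h * ωmax * Real.sqrt (α / 2 - β) := by positivity
        nlinarith [h2, h3, hle, hx0]
end

section
/- Let H, Ḣ, Ḧ be real m×n matrices, N a real n×k matrix whose columns span the null space of H (i.e., H·N = 0 and every u ∈ ℝⁿ with H·u = 0 is of the form N·γ for some γ ∈ ℝᵏ), and b, c, d ∈ ℝᵐ. Suppose x_p, ẋ_p, ẍ_p ∈ ℝⁿ and real n×k matrices Ẋ_p, Ẍ_{p1} satisfy: H·x_p = b; H·ẋ_p = c − Ḣ·x_p; H·Ẋ_p = −Ḣ·N; H·ẍ_p = d − 2·Ḣ·ẋ_p − Ḧ·x_p; and H·Ẍ_{p1} = −2·Ḣ·Ẋ_p − Ḧ·N. Then for every triple (x, ẋ, ẍ) ∈ ℝⁿ × ℝⁿ × ℝⁿ satisfying H·x = b, H·ẋ + Ḣ·x = c, and H·ẍ + 2·Ḣ·ẋ + Ḧ·x = d, there exist α, α̇, α̈ ∈ ℝᵏ such that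 x = x_p + N·α, ẋ = ẋ_p + N·α̇ + Ẋ_p·α, and ẍ = ẍ_p + Ẍ_{p1}·α + 2·Ẋ_p·α̇ + N·α̈. That is, the tangent-space parametrization reaches every solution of the linearized constraints. -/
open Matrix

/-- The tangent-space parametrization reaches every solution of the linearized
constraints: if the columns of `N` span the null space of `H` and
`x_p, ẋ_p, Ẋ_p, ẍ_p, Ẍ_{p1}` solve the auxiliary systems, then every triple
`(x, ẋ, ẍ)` satisfying `H·x = b`, `H·ẋ + Ḣ·x = c`, `H·ẍ + 2·Ḣ·ẋ + Ḧ·x = d`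
is of the form `x = x_p + N·α`, `ẋ = ẋ_p + N·α̇ + Ẋ_p·α`,
`ẍ = ẍ_p + Ẍ_{p1}·α + 2·Ẋ_p·α̇ + N·α̈` for some `α, α̇, α̈ ∈ ℝᵏ`. -/
theorem tangent_space_param_surjective
    {m n k : ℕ}
    (H Hd Hdd : Matrix (Fin m) (Fin n) ℝ)
    (N : Matrix (Fin n) (Fin k) ℝ)
    (hHN : H * N = 0)
    (hspan : ∀ u : Fin n → ℝ, H.mulVec u = 0 → ∃ γ : Fin k → ℝ, u = N.mulVec γ)
    (b c d : Fin m → ℝ)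
    (xp xdp xddp : Fin n → ℝ)
    (Xdp Xddp1 : Matrix (Fin n) (Fin k) ℝ)
    (h1 : H.mulVec xp = b)
    (h2 : H.mulVec xdp = c - Hd.mulVec xp)
    (h3 : H * Xdp = -(Hd * N))
    (h4 : H.mulVec xddp = d - (2 : ℝ) • Hd.mulVec xdp - Hdd.mulVec xp)
    (h5 : H * Xddp1 = -((2 : ℝ) • (Hd * Xdp)) - Hdd * N) :
    ∀ x xd xdd : Fin n → ℝ,
      H.mulVec x = b →
      H.mulVec xd + Hd.mulVec x = c →
      H.mulVec xdd + (2 : ℝ) • Hd.mulVec xd + Hdd.mulVec x = d →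
      ∃ al ald aldd : Fin k → ℝ,
        x = xp + N.mulVec al ∧
        xd = xdp + N.mulVec ald + Xdp.mulVec al ∧
        xdd = xddp + Xddp1.mulVec al + (2 : ℝ) • Xdp.mulVec ald + N.mulVec aldd := by
  intro x xd xdd hx hxd hxdd
  obtain ⟨al, hal⟩ := hspan (x - xp) (by rw [mulVec_sub, hx, h1, sub_self])
  have hxeq : x = xp + N.mulVec al := by rw [← hal]; abel
  obtain ⟨ald, hald⟩ := hspan (xd - xdp - Xdp.mulVec al) (by
    rw [mulVec_sub, mulVec_sub, mulVec_mulVec, h3, h2]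
    have : H.mulVec xd = c - Hd.mulVec x := by rw [← hxd]; abel
    rw [this, hxeq]
    simp only [mulVec_add, mulVec_mulVec, hHN, zero_mulVec, neg_mulVec]
    module)
  have hxdeq : xd = xdp + N.mulVec ald + Xdp.mulVec al := by rw [← hald]; abel
  obtain ⟨aldd, haldd⟩ := hspan
      (xdd - xddp - Xddp1.mulVec al - (2:ℝ) • Xdp.mulVec ald) (by
    have hxdd' : H.mulVec xdd = d - (2:ℝ) • Hd.mulVec xd - Hdd.mulVec x := by
      rw [← hxdd]; abel
    rw [mulVec_sub, mulVec_sub, mulVec_sub, mulVec_smul, mulVec_mulVec,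
      mulVec_mulVec, h3, h5, hxdd', h4, hxeq, hxdeq]
    simp only [mulVec_add, mulVec_smul, mulVec_mulVec, hHN, sub_mulVec,
      neg_mulVec, smul_mulVec, zero_mulVec, smul_zero]
    module)
  refine ⟨al, ald, aldd, hxeq, hxdeq, ?_⟩
  rw [← haldd]; abel
end
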